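/- For each c ∈ (0,∞), the limit as n → ∞ of the discrepancy D(p(n, c/√n)) equals ℓ(c) = c²/(1+c²) − ∫₀^∞ c² t e^{−ct − t²/2} dt, where p(n,x) = (x, (1−x)/n, ..., (1−x)/n). -/

import Mathlib

open MeasureTheory Real Filter Set Finset Topology

lemma myIntegrableOn_pow_mul_exp (m : ℕ) {b : ℝ} (hb : 0 < b) :
    IntegrableOn (fun u : ℝ => u ^ m * Real.exp (-(b * u))) (Ioi 0) := by
  have h := integrableOn_rpow_mul_exp_neg_mul_rpow (p := 1) (s := m) (b := b)
    (by exact lt_of_lt_of_le neg_one_lt_zero (Nat.cast_nonneg m)) one_pos hb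
  refine h.congr_fun (fun u hu => ?_) measurableSet_Ioi
  dsimp only
  rw [Real.rpow_natCast, Real.rpow_one, neg_mul]

lemma myIntegral_pow_mul_exp (m : ℕ) {b : ℝ} (hb : 0 < b) :
    ∫ u in Ioi (0:ℝ), u ^ m * Real.exp (-(b * u)) = (m.factorial : ℝ) / b ^ (m + 1) := by
  have h := integral_rpow_mul_exp_neg_mul_Ioi (a := (m : ℝ) + 1) (r := b)
    (by positivity) hb
  rw [show ((m : ℝ) + 1 - 1) = (m : ℝ) by ring] at h
  have h2 : ∫ u in Ioi (0:ℝ), u ^ m * Real.exp (-(b * u))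
      = ∫ t in Ioi (0:ℝ), t ^ (m : ℝ) * Real.exp (-(b * t)) := by
    refine setIntegral_congr_fun measurableSet_Ioi (fun u hu => ?_)
    rw [Real.rpow_natCast]
  have hg : Real.Gamma ((m:ℝ) + 1) = (m.factorial : ℝ) := Real.Gamma_nat_eq_factorial m
  rw [h2, h, hg, show ((m:ℝ) + 1) = ((m + 1 : ℕ) : ℝ) by push_cast; ring,
    Real.rpow_natCast, one_div, inv_pow, div_eq_mul_inv, mul_comm]

lemma key_pointwise (n m : ℕ) (a b u : ℝ) :
    u ^ m * Real.exp (-(b * u)) * (1 + a * u) ^ n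
      = ∑ k ∈ Finset.range (n + 1),
          (n.choose k : ℝ) * a ^ k * (u ^ (k + m) * Real.exp (-(b * u))) := by
  rw [add_comm (1 : ℝ), add_pow, Finset.mul_sum]
  refine Finset.sum_congr rfl (fun k _ => ?_)
  rw [one_pow, mul_pow, pow_add]
  ring

lemma myIntegrableOn_binom (n m : ℕ) (a : ℝ) {b : ℝ} (hb : 0 < b) :
    IntegrableOn (fun u : ℝ => u ^ m * Real.exp (-(b * u)) * (1 + a * u) ^ n) (Ioi 0) := by
  have : IntegrableOn (fun u : ℝ => ∑ k ∈ Finset.range (n + 1),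
      (n.choose k : ℝ) * a ^ k * (u ^ (k + m) * Real.exp (-(b * u)))) (Ioi 0) := by
    apply MeasureTheory.integrable_finset_sum
    intro k _
    exact ((myIntegrableOn_pow_mul_exp (k + m) hb).const_mul _)
  exact this.congr_fun (fun u _ => (key_pointwise n m a b u).symm) measurableSet_Ioi

lemma myIntegral_binom (n m : ℕ) (a : ℝ) {b : ℝ} (hb : 0 < b) :
    ∫ u in Ioi (0:ℝ), u ^ m * Real.exp (-(b * u)) * (1 + a * u) ^ n
      = ∑ k ∈ Finset.range (n + 1),
          (n.choose k : ℝ) * a ^ k * ((k + m).factorial / b ^ (k + m + 1)) := by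
  rw [show (fun u : ℝ => u ^ m * Real.exp (-(b * u)) * (1 + a * u) ^ n)
      = (fun u : ℝ => ∑ k ∈ Finset.range (n + 1),
          (n.choose k : ℝ) * a ^ k * (u ^ (k + m) * Real.exp (-(b * u))))
      from funext (fun u => key_pointwise n m a b u)]
  rw [MeasureTheory.integral_finset_sum _
    (fun k _ => ((myIntegrableOn_pow_mul_exp (k + m) hb).const_mul _))]
  refine Finset.sum_congr rfl (fun k _ => ?_)
  rw [integral_const_mul _ _, myIntegral_pow_mul_exp (k + m) hb]

lemma tendsto_linear_mul_exp {d : ℝ} (hd : 0 < d) (K : ℝ) :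
    Tendsto (fun u : ℝ => (1 + K * u) * Real.exp (-(d * u))) atTop (𝓝 0) := by
  have h1 : Tendsto (fun u : ℝ => Real.exp (-(d * u))) atTop (𝓝 0) := by
    have := Real.tendsto_exp_neg_atTop_nhds_zero.comp
      (tendsto_id.const_mul_atTop hd)
    simpa [Function.comp_def] using this
  have h2 : Tendsto (fun u : ℝ => u * Real.exp (-(d * u))) atTop (𝓝 0) := by
    have base := (tendsto_pow_mul_exp_neg_atTop_nhds_zero 1).comp
      (tendsto_id.const_mul_atTop hd)
    have : Tendsto (fun u : ℝ => d * u * Real.exp (-(d * u))) atTop (𝓝 0) := by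
      simpa [Function.comp_def, pow_one] using base
    have := this.const_mul (d⁻¹)
    rw [mul_zero] at this
    refine this.congr' ?_
    filter_upwards [eventually_gt_atTop 0] with u hu
    field_simp
  have : Tendsto (fun u : ℝ => Real.exp (-(d * u)) + K * (u * Real.exp (-(d * u))))
      atTop (𝓝 (0 + K * 0)) := h1.add (h2.const_mul K)
  rw [mul_zero, add_zero] at this
  refine this.congr (fun u => by ring)

lemma tendsto_poly_exp {b : ℝ} (hb : 0 < b) {a γ : ℝ} (ha : 0 ≤ a) (hγ : 0 ≤ γ) (n : ℕ) :
    Tendsto (fun u : ℝ => Real.exp (-(b * u)) * (1 + a * u) ^ n * (1 + γ * u)) atTop (𝓝 0) := by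
  set K := max a γ with hK
  have hKa : a ≤ K := le_max_left _ _
  have hKγ : γ ≤ K := le_max_right _ _
  set d := b / (n + 1) with hd
  have hdpos : 0 < d := by positivity
  have hinner : Tendsto (fun u : ℝ => (1 + K * u) * Real.exp (-(d * u))) atTop (𝓝 0) :=
    tendsto_linear_mul_exp hdpos K
  have houter : Tendsto (fun u : ℝ => ((1 + K * u) * Real.exp (-(d * u))) ^ (n + 1))
      atTop (𝓝 0) := by
    have := hinner.pow (n + 1)
    simpa using this
  refine tendsto_of_tendsto_of_tendsto_of_le_of_le' tendsto_const_nhds houter ?_ ?_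
  · filter_upwards [eventually_ge_atTop (0:ℝ)] with u hu
    have h1 : (0:ℝ) ≤ 1 + a * u := by nlinarith
    have h2 : (0:ℝ) ≤ 1 + γ * u := by nlinarith
    positivity
  · filter_upwards [eventually_ge_atTop (0:ℝ)] with u hu
    have h1 : (0:ℝ) ≤ 1 + a * u := by nlinarith
    have h2 : (1:ℝ) + a * u ≤ 1 + K * u := by nlinarith
    have h3 : (0:ℝ) ≤ 1 + γ * u := by nlinarith
    have h4 : (1:ℝ) + γ * u ≤ 1 + K * u := by nlinarith
    have h5 : (0:ℝ) ≤ 1 + K * u := by linarith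
    have hexp : Real.exp (-(b * u)) = (Real.exp (-(d * u))) ^ (n + 1) := by
      rw [← Real.exp_nat_mul]
      congr 1
      have : ((n:ℝ) + 1) ≠ 0 := by positivity
      rw [hd]
      push_cast
      field_simp
    calc Real.exp (-(b * u)) * (1 + a * u) ^ n * (1 + γ * u)
        ≤ Real.exp (-(b * u)) * (1 + K * u) ^ n * (1 + K * u) := by
          have hpow := pow_le_pow_left₀ h1 h2 n
          have e1 : 0 < Real.exp (-(b * u)) := Real.exp_pos _
          exact mul_le_mul (mul_le_mul_of_nonneg_left hpow e1.le) h4 h3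
            (mul_nonneg e1.le (pow_nonneg h5 n))
      _ = ((1 + K * u) * Real.exp (-(d * u))) ^ (n + 1) := by
          rw [hexp, mul_pow, pow_succ]
          ring

lemma ftc_deriv (m : ℕ) (a γ : ℝ) (u : ℝ) :
    HasDerivAt (fun u : ℝ => -(Real.exp (-((((m:ℝ)+1) * a + γ) * u)) * (1 + a * u) ^ (m+1) * (1 + γ * u)))
      (Real.exp (-((((m:ℝ)+1) * a + γ) * u)) * (1 + a * u) ^ m *
        (u * ((((m:ℝ)+1) * a^2 + γ^2) + a * γ * (((m:ℝ)+1)*a+γ) * u))) u := by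
  set b : ℝ := ((m:ℝ)+1) * a + γ with hbdef
  have hf : HasDerivAt (fun u : ℝ => -(b * u)) (-b) u := by
    simpa using (hasDerivAt_id u).const_mul (-b)
  have hE : HasDerivAt (fun u : ℝ => Real.exp (-(b * u)))
      (Real.exp (-(b * u)) * (-b)) u := hf.exp
  have hP : HasDerivAt (fun u : ℝ => (1 + a * u) ^ (m+1))
      (((m:ℝ)+1) * (1 + a * u) ^ m * a) u := by
    have hlin : HasDerivAt (fun u : ℝ => 1 + a * u) a u := by
      simpa using ((hasDerivAt_id u).const_mul a).const_add 1
    have := hlin.fun_pow (m+1)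
    simpa using this
  have hQ : HasDerivAt (fun u : ℝ => 1 + γ * u) γ u := by
    simpa using ((hasDerivAt_id u).const_mul γ).const_add 1
  have h := ((hE.fun_mul hP).fun_mul hQ).fun_neg
  refine h.congr_deriv ?_
  have hps : (1 + a * u) ^ (m+1) = (1 + a * u) ^ m * (1 + a * u) := pow_succ _ _
  rw [hps]
  ring

lemma ftc_one (m : ℕ) {a γ : ℝ} (ha : 0 ≤ a) (hγ : 0 ≤ γ) (hb : 0 < ((m:ℝ)+1) * a + γ) :
    IntegrableOn (fun u : ℝ => Real.exp (-((((m:ℝ)+1) * a + γ) * u)) * (1 + a * u) ^ m *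
        (u * ((((m:ℝ)+1) * a^2 + γ^2) + a * γ * (((m:ℝ)+1)*a+γ) * u))) (Ioi 0) ∧
    ∫ u in Ioi (0:ℝ), Real.exp (-((((m:ℝ)+1) * a + γ) * u)) * (1 + a * u) ^ m *
        (u * ((((m:ℝ)+1) * a^2 + γ^2) + a * γ * (((m:ℝ)+1)*a+γ) * u)) = 1 := by
  have hderiv : ∀ u ∈ Ici (0:ℝ), HasDerivAt
      (fun u : ℝ => -(Real.exp (-((((m:ℝ)+1) * a + γ) * u)) * (1 + a * u) ^ (m+1) * (1 + γ * u)))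
      (Real.exp (-((((m:ℝ)+1) * a + γ) * u)) * (1 + a * u) ^ m *
        (u * ((((m:ℝ)+1) * a^2 + γ^2) + a * γ * (((m:ℝ)+1)*a+γ) * u))) u :=
    fun u _ => ftc_deriv m a γ u
  have hpos : ∀ u ∈ Ioi (0:ℝ), 0 ≤ Real.exp (-((((m:ℝ)+1) * a + γ) * u)) * (1 + a * u) ^ m *
      (u * ((((m:ℝ)+1) * a^2 + γ^2) + a * γ * (((m:ℝ)+1)*a+γ) * u)) := by
    intro u hu
    have hu0 : (0:ℝ) < u := hu
    have h1 : (0:ℝ) ≤ 1 + a * u := by nlinarith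
    have h2 : (0:ℝ) ≤ ((m:ℝ)+1) * a^2 + γ^2 := by positivity
    have h3 : (0:ℝ) ≤ a * γ * (((m:ℝ)+1)*a+γ) * u := by positivity
    have := Real.exp_pos (-((((m:ℝ)+1) * a + γ) * u))
    have h4 : (0:ℝ) ≤ u * ((((m:ℝ)+1) * a^2 + γ^2) + a * γ * (((m:ℝ)+1)*a+γ) * u) := by
      apply mul_nonneg hu0.le
      nlinarith
    exact mul_nonneg (mul_nonneg this.le (pow_nonneg h1 m)) h4
  have hg : Tendsto (fun u : ℝ => -(Real.exp (-((((m:ℝ)+1) * a + γ) * u)) * (1 + a * u) ^ (m+1) * (1 + γ * u)))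
      atTop (𝓝 0) := by
    have := (tendsto_poly_exp hb ha hγ (m+1)).neg
    rwa [neg_zero] at this
  constructor
  · exact integrableOn_Ioi_deriv_of_nonneg' hderiv hpos hg
  · have := integral_Ioi_of_hasDerivAt_of_nonneg' hderiv hpos hg
    rw [this]
    norm_num

lemma ftc_lim_deriv (c : ℝ) (u : ℝ) :
    HasDerivAt (fun u : ℝ => -((1 + c * u) * Real.exp (-c*u - u^2/2)))
      (u * ((1 + c^2) + c * u) * Real.exp (-c*u - u^2/2)) u := by
  have hf : HasDerivAt (fun u : ℝ => -c*u - u^2/2) (-c - u) u := by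
    have h1 : HasDerivAt (fun u : ℝ => -c*u) (-c) u := by
      simpa using (hasDerivAt_id u).const_mul (-c)
    have h2 : HasDerivAt (fun u : ℝ => u^2/2) u u := by
      have := (hasDerivAt_pow 2 u).div_const 2
      simpa using this
    simpa using h1.fun_sub h2
  have hE : HasDerivAt (fun u : ℝ => Real.exp (-c*u - u^2/2))
      (Real.exp (-c*u - u^2/2) * (-c - u)) u := hf.exp
  have hQ : HasDerivAt (fun u : ℝ => 1 + c * u) c u := by
    simpa using ((hasDerivAt_id u).const_mul c).const_add 1
  have h := (hQ.fun_mul hE).fun_neg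
  refine h.congr_deriv ?_
  ring

lemma ftc_lim (c : ℝ) (hc : 0 < c) :
    IntegrableOn (fun u : ℝ => u * ((1 + c^2) + c * u) * Real.exp (-c*u - u^2/2)) (Ioi 0) ∧
    ∫ u in Ioi (0:ℝ), u * ((1 + c^2) + c * u) * Real.exp (-c*u - u^2/2) = 1 := by
  have hderiv : ∀ u ∈ Ici (0:ℝ), HasDerivAt (fun u : ℝ => -((1 + c * u) * Real.exp (-c*u - u^2/2)))
      (u * ((1 + c^2) + c * u) * Real.exp (-c*u - u^2/2)) u := fun u _ => ftc_lim_deriv c u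
  have hpos : ∀ u ∈ Ioi (0:ℝ), 0 ≤ u * ((1 + c^2) + c * u) * Real.exp (-c*u - u^2/2) := by
    intro u hu
    have hu0 : (0:ℝ) < u := hu
    have := Real.exp_pos (-c*u - u^2/2)
    have h1 : (0:ℝ) ≤ (1 + c^2) + c * u := by positivity
    positivity
  have hg : Tendsto (fun u : ℝ => -((1 + c * u) * Real.exp (-c*u - u^2/2))) atTop (𝓝 0) := by
    have hsq : Tendsto (fun u : ℝ => (1 + c * u) * Real.exp (-c*u - u^2/2)) atTop (𝓝 0) := by
      refine tendsto_of_tendsto_of_tendsto_of_le_of_le' tendsto_const_nhds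
        (tendsto_linear_mul_exp hc c) ?_ ?_
      · filter_upwards [eventually_ge_atTop (0:ℝ)] with u hu
        have h1 : (0:ℝ) ≤ 1 + c * u := by nlinarith
        positivity
      · filter_upwards [eventually_ge_atTop (0:ℝ)] with u hu
        have h1 : (0:ℝ) ≤ 1 + c * u := by nlinarith
        have h2 : Real.exp (-c*u - u^2/2) ≤ Real.exp (-(c*u)) := by
          apply Real.exp_le_exp.mpr
          nlinarith
        exact mul_le_mul_of_nonneg_left h2 h1
    have := hsq.neg
    rwa [neg_zero] at this
  constructor
  · exact integrableOn_Ioi_deriv_of_nonneg' hderiv hpos hg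
  · have := integral_Ioi_of_hasDerivAt_of_nonneg' hderiv hpos hg
    rw [this]
    norm_num

lemma esum_const {ι : Type*} [DecidableEq ι] (s : Finset ι) (f : ι → ℝ) (q : ℝ)
    (h : ∀ l ∈ s, f l = q) (k : ℕ) :
    ∑ J ∈ s.powersetCard k, ∏ l ∈ J, f l = (s.card.choose k : ℝ) * q ^ k := by
  have : ∀ J ∈ s.powersetCard k, ∏ l ∈ J, f l = q ^ k := by
    intro J hJ
    obtain ⟨hJs, hJc⟩ := Finset.mem_powersetCard.mp hJ
    rw [Finset.prod_congr rfl (fun l hl => h l (hJs hl)), Finset.prod_const, hJc]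
  rw [Finset.sum_congr rfl this, Finset.sum_const, Finset.card_powersetCard,
    nsmul_eq_mul]

lemma esum_insert {ι : Type*} [DecidableEq ι] {s : Finset ι} {b : ι} (hb : b ∉ s)
    (f : ι → ℝ) (k : ℕ) :
    ∑ J ∈ (insert b s).powersetCard (k+1), ∏ l ∈ J, f l =
      ∑ J ∈ s.powersetCard (k+1), ∏ l ∈ J, f l
        + f b * ∑ J ∈ s.powersetCard k, ∏ l ∈ J, f l := by
  rw [Finset.powersetCard_succ_insert hb]
  rw [Finset.sum_union]
  · congr 1
    rw [Finset.sum_image, Finset.mul_sum]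
    · refine Finset.sum_congr rfl (fun J hJ => ?_)
      obtain ⟨hJs, _⟩ := Finset.mem_powersetCard.mp hJ
      have hbJ : b ∉ J := fun hmem => hb (hJs hmem)
      rw [Finset.prod_insert hbJ]
    · intro J1 h1 J2 h2 he
      obtain ⟨hJ1, _⟩ := Finset.mem_powersetCard.mp h1
      obtain ⟨hJ2, _⟩ := Finset.mem_powersetCard.mp h2
      have hb1 : b ∉ J1 := fun hmem => hb (hJ1 hmem)
      have hb2 : b ∉ J2 := fun hmem => hb (hJ2 hmem)
      rw [← Finset.erase_insert hb1, ← Finset.erase_insert hb2, he]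
  · rw [Finset.disjoint_left]
    intro J h1 h2
    obtain ⟨hJs, _⟩ := Finset.mem_powersetCard.mp h1
    obtain ⟨J', hJ', rfl⟩ := Finset.mem_image.mp h2
    exact hb (hJs (Finset.mem_insert_self b J'))

lemma T_zero_eq (n : ℕ) (q : ℝ) (p : Fin (n+1) → ℝ) (hpq : ∀ l, l ≠ 0 → p l = q) :
    ∑ k ∈ Finset.range (n+1), ((k+1).factorial : ℝ) *
      ∑ J ∈ (Finset.univ.erase (0 : Fin (n+1))).powersetCard k, ∏ l ∈ J, p l
    = ∑ k ∈ Finset.range (n+1), ((k+1).factorial : ℝ) * ((n.choose k : ℝ) * q ^ k) := by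
  have hcard : (Finset.univ.erase (0 : Fin (n+1))).card = n := by
    rw [Finset.card_erase_of_mem (Finset.mem_univ _), Finset.card_univ, Fintype.card_fin]
    omega
  refine Finset.sum_congr rfl (fun k _ => ?_)
  rw [esum_const _ p q (fun l hl => hpq l (Finset.mem_erase.mp hl).1) k, hcard]

lemma T_ne_eq (n : ℕ) (hn : 1 ≤ n) (x q : ℝ) (p : Fin (n+1) → ℝ)
    (hp0 : p 0 = x) (hpq : ∀ l, l ≠ 0 → p l = q) (i : Fin (n+1)) (hi : i ≠ 0) :
    ∑ k ∈ Finset.range (n+1), ((k+1).factorial : ℝ) *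
      ∑ J ∈ (Finset.univ.erase i).powersetCard k, ∏ l ∈ J, p l
    = ∑ k ∈ Finset.range n, ((k+1).factorial : ℝ) * (((n-1).choose k : ℝ) * q ^ k)
      + x * ∑ k ∈ Finset.range n, ((k+2).factorial : ℝ) * (((n-1).choose k : ℝ) * q ^ k) := by
  obtain ⟨m, rfl⟩ := Nat.exists_eq_add_of_le hn
  set s : Finset (Fin (1 + m + 1)) := (Finset.univ.erase i).erase 0 with hs
  have h0i : (0 : Fin (1 + m + 1)) ∈ Finset.univ.erase i :=
    Finset.mem_erase.mpr ⟨fun h => hi h.symm, Finset.mem_univ _⟩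
  have hins : insert (0 : Fin (1 + m + 1)) s = Finset.univ.erase i :=
    Finset.insert_erase h0i
  have h0s : (0 : Fin (1 + m + 1)) ∉ s := Finset.notMem_erase _ _
  have hcards : s.card = m := by
    rw [hs, Finset.card_erase_of_mem h0i, Finset.card_erase_of_mem (Finset.mem_univ _),
      Finset.card_univ, Fintype.card_fin]
    omega
  have hval : ∀ l ∈ s, p l = q := by
    intro l hl
    exact hpq l (Finset.mem_erase.mp hl).1
  have he : ∀ k, ∑ J ∈ s.powersetCard k, ∏ l ∈ J, p l = ((m.choose k : ℝ)) * q ^ k := by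
    intro k
    rw [esum_const s p q hval k, hcards]
  have hm1 : 1 + m - 1 = m := by omega
  rw [← hins, hm1]
  rw [Finset.sum_range_succ' _ (1 + m)]
  have hf0 : ((0+1).factorial : ℝ) *
      ∑ J ∈ (insert (0 : Fin (1+m+1)) s).powersetCard 0, ∏ l ∈ J, p l = 1 := by
    simp
  rw [hf0]
  have hfk : ∀ k, ((k+1+1).factorial : ℝ) *
      ∑ J ∈ (insert (0 : Fin (1+m+1)) s).powersetCard (k+1), ∏ l ∈ J, p l
      = ((k+2).factorial : ℝ) * ((m.choose (k+1) : ℝ) * q ^ (k+1))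
        + x * (((k+2).factorial : ℝ) * ((m.choose k : ℝ) * q ^ k)) := by
    intro k
    rw [esum_insert h0s p k, he, he, hp0]
    ring_nf
  rw [Finset.sum_congr rfl (fun k _ => hfk k), Finset.sum_add_distrib, ← Finset.mul_sum]
  have hB1 : ∑ k ∈ Finset.range (1 + m), ((k+1).factorial : ℝ) * ((m.choose k : ℝ) * q ^ k)
      = (∑ k ∈ Finset.range m, ((k+1+1).factorial : ℝ) * ((m.choose (k+1) : ℝ) * q ^ (k+1))) + 1 := by
    rw [show 1 + m = m + 1 by omega, Finset.sum_range_succ' _ m]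
    simp
  have hS1 : ∑ k ∈ Finset.range (1 + m), ((k+2).factorial : ℝ) * ((m.choose (k+1) : ℝ) * q ^ (k+1))
      = ∑ k ∈ Finset.range m, ((k+2).factorial : ℝ) * ((m.choose (k+1) : ℝ) * q ^ (k+1)) := by
    rw [show 1 + m = m + 1 by omega, Finset.sum_range_succ]
    simp [Nat.choose_succ_self]
  rw [hS1, hB1]
  have : ∀ k, ((k+1+1).factorial : ℝ) = ((k+2).factorial : ℝ) := fun k => by norm_num
  rw [Finset.sum_congr rfl (fun k _ => by rw [this k])]
  ring

lemma log_quad {z : ℝ} (h0 : 0 ≤ z) (h1 : z ≤ 1/2) :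
    |Real.log (1+z) - (z - z^2/2)| ≤ 2*z^3 := by
  have habs : |(-z)| < 1 := by rw [abs_neg, abs_of_nonneg h0]; linarith
  have h := Real.abs_log_sub_add_sum_range_le habs 2
  have hsum : (∑ i ∈ Finset.range 2, (-z)^(i+1)/((i:ℝ)+1)) = -z + z^2/2 := by
    rw [Finset.sum_range_succ, Finset.sum_range_succ, Finset.sum_range_zero]
    norm_num
  rw [hsum] at h
  have heq : -z + z^2/2 + Real.log (1 - -z) = Real.log (1+z) - (z - z^2/2) := by
    rw [sub_neg_eq_add]; ring
  rw [heq, abs_neg, abs_of_nonneg h0] at h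
  refine h.trans ?_
  rw [div_le_iff₀ (by linarith : (0:ℝ) < 1 - z)]
  have h3 : z^(2+1) = z^3 := by norm_num
  rw [h3]
  nlinarith [pow_nonneg h0 3, mul_nonneg (pow_nonneg h0 3) (by linarith : (0:ℝ) ≤ 1 - 2*z)]


lemma alg1 {N s : ℝ} (hss : s*s = N) (hs : s ≠ 0) (c u : ℝ) :
    N * ((1 - c/s)/s*u) = s*u - c*u := by
  subst hss; field_simp

lemma alg2 {N s : ℝ} (hss : s*s = N) (hs : s ≠ 0) (c u : ℝ) :
    N * ((1 - c/s)/s*u)^2 = ((1 - c/s)*u)^2 := by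
  subst hss; field_simp

lemma alg3 {N s : ℝ} (hss : s*s = N) (hs : s ≠ 0) (c u : ℝ) :
    N * (2*((1 - c/s)/s*u)^3) = 2*(1 - c/s)^3*u^3/s := by
  subst hss; field_simp

noncomputable def fseq (c : ℝ) (n : ℕ) (u : ℝ) : ℝ :=
  u * Real.exp (-(Real.sqrt n * u)) * (1 + (1 - c / Real.sqrt n) / Real.sqrt n * u) ^ n

lemma tendsto_sqrt_nat : Tendsto (fun n : ℕ => Real.sqrt n) atTop atTop := by
  have h1 : Tendsto (fun x : ℝ => x ^ (1/2 : ℝ)) atTop atTop :=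
    tendsto_rpow_atTop (by norm_num)
  have := h1.comp tendsto_natCast_atTop_atTop
  refine this.congr (fun n => ?_)
  rw [Function.comp_apply]
  exact (Real.sqrt_eq_rpow _).symm

lemma tendsto_x0 (c : ℝ) : Tendsto (fun n : ℕ => c / Real.sqrt n) atTop (𝓝 0) :=
  tendsto_const_nhds.div_atTop tendsto_sqrt_nat

lemma fseq_tendsto (c : ℝ) (hc : 0 < c) (u : ℝ) (hu : 0 < u) :
    Tendsto (fun n : ℕ => fseq c n u) atTop (𝓝 (u * Real.exp (-c*u - u^2/2))) := by
  have hev : ∀ᶠ n : ℕ in atTop, 2*c ≤ Real.sqrt n ∧ 2*u ≤ Real.sqrt n ∧ 1 ≤ Real.sqrt n := by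
    filter_upwards [tendsto_sqrt_nat.eventually_ge_atTop (2*c),
      tendsto_sqrt_nat.eventually_ge_atTop (2*u),
      tendsto_sqrt_nat.eventually_ge_atTop 1] with n h1 h2 h3
    exact ⟨h1, h2, h3⟩
  set E : ℕ → ℝ := fun n => (n:ℝ) * Real.log (1 + (1 - c / Real.sqrt n) / Real.sqrt n * u)
      - Real.sqrt n * u with hE
  set ctr : ℕ → ℝ := fun n => -(c*u) - (1 - c / Real.sqrt n)^2 * u^2/2 with hctr
  have hctr_lim : Tendsto ctr atTop (𝓝 (-c*u - u^2/2)) := by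
    have h1 : Tendsto (fun n : ℕ => (1 - c / Real.sqrt n)) atTop (𝓝 1) := by
      have := (tendsto_x0 c).const_sub 1
      simpa using this
    have h2 := ((h1.pow 2).mul_const (u^2/2)).const_sub (-(c*u))
    have e : -(c*u) - 1^2*(u^2/2) = -c*u - u^2/2 := by ring
    rw [e] at h2
    exact h2.congr (fun n => by rw [hctr]; ring)
  have herr : Tendsto (fun n : ℕ => E n - ctr n) atTop (𝓝 0) := by
    refine squeeze_zero_norm' ?_
      ((tendsto_const_nhds : Tendsto (fun _ : ℕ => 2*u^3) atTop (𝓝 (2*u^3))).div_atTop tendsto_sqrt_nat)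
    · filter_upwards [hev] with n hn3
      obtain ⟨h2c, h2u, h1n⟩ := hn3
      have hs0 : (0:ℝ) < Real.sqrt n := lt_of_lt_of_le one_pos h1n
      have hss : Real.sqrt n * Real.sqrt n = (n:ℝ) := Real.mul_self_sqrt (Nat.cast_nonneg n)
      have hsne : Real.sqrt n ≠ 0 := ne_of_gt hs0
      have hx2 : c / Real.sqrt n ≤ 1/2 := by
        rw [div_le_iff₀ hs0]; nlinarith
      have hx0 : 0 ≤ c / Real.sqrt n := by positivity
      have hz0 : 0 ≤ (1 - c / Real.sqrt n) / Real.sqrt n * u := by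
        apply mul_nonneg _ hu.le
        apply div_nonneg _ hs0.le
        linarith
      have hz1 : (1 - c / Real.sqrt n) / Real.sqrt n * u ≤ 1/2 := by
        have hle : (1 - c / Real.sqrt n) / Real.sqrt n * u ≤ u / Real.sqrt n := by
          rw [div_mul_eq_mul_div, div_le_div_iff₀ hs0 hs0]
          nlinarith [mul_nonneg (mul_nonneg hx0 hu.le) hs0.le]
        refine hle.trans ?_
        rw [div_le_iff₀ hs0]; nlinarith
      have h1 : (n:ℝ) * ((1 - c / Real.sqrt n) / Real.sqrt n * u)
          = Real.sqrt n * u - c * u := alg1 hss hsne c u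
      have h2 : (n:ℝ) * ((1 - c / Real.sqrt n) / Real.sqrt n * u)^2
          = ((1 - c / Real.sqrt n) * u)^2 := alg2 hss hsne c u
      have hkey : E n - ctr n = (n:ℝ) * (Real.log (1 + (1 - c / Real.sqrt n) / Real.sqrt n * u)
          - ((1 - c / Real.sqrt n) / Real.sqrt n * u
            - ((1 - c / Real.sqrt n) / Real.sqrt n * u)^2/2)) := by
        simp only [hE, hctr]
        linear_combination h1 - h2/2
      rw [hkey, norm_mul, norm_eq_abs, norm_eq_abs, abs_of_nonneg (Nat.cast_nonneg n)]
      have hlq := log_quad hz0 hz1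
      have hb1 := mul_le_mul_of_nonneg_left hlq (Nat.cast_nonneg (α := ℝ) n)
      refine hb1.trans ?_
      have heq2 : (n:ℝ) * (2*((1 - c / Real.sqrt n) / Real.sqrt n * u)^3)
          = 2*(1 - c / Real.sqrt n)^3*u^3/Real.sqrt n := alg3 hss hsne c u
      rw [heq2]
      have hcs1 : (1 - c / Real.sqrt n) ≤ 1 := by linarith
      have hcs0 : (0:ℝ) ≤ (1 - c / Real.sqrt n) := by linarith
      have hfin : (1 - c / Real.sqrt n)^3 * (u^3 * Real.sqrt n) ≤ 1 * (u^3 * Real.sqrt n) :=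
        mul_le_mul_of_nonneg_right (pow_le_one₀ hcs0 hcs1)
          (mul_nonneg (pow_nonneg hu.le 3) hs0.le)
      rw [div_le_div_iff₀ hs0 hs0]
      nlinarith [hfin]
  have hElim : Tendsto E atTop (𝓝 (-c*u - u^2/2)) := by
    have h := herr.add hctr_lim
    rw [zero_add] at h
    exact h.congr (fun n => by ring)
  have hexp : Tendsto (fun n : ℕ => u * Real.exp (E n)) atTop
      (𝓝 (u * Real.exp (-c*u - u^2/2))) :=
    ((Real.continuous_exp.continuousAt.tendsto.comp hElim).const_mul u)
  refine hexp.congr' ?_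
  filter_upwards [hev] with n ⟨h2c, h2u, h1n⟩
  set s := Real.sqrt n with hsdef
  have hs0 : 0 < s := lt_of_lt_of_le one_pos h1n
  have hx2 : c/s ≤ 1/2 := by rw [div_le_iff₀ hs0]; nlinarith
  have hz0 : 0 ≤ (1 - c/s)/s * u := by
    apply mul_nonneg _ hu.le
    apply div_nonneg _ hs0.le
    linarith
  have hpos : 0 < 1 + (1 - c/s)/s * u := by linarith
  show u * Real.exp (E n) = fseq c n u
  rw [hE, fseq]
  simp only []
  rw [Real.exp_sub, Real.exp_nat_mul, Real.exp_log hpos, Real.exp_neg, div_eq_mul_inv]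
  ring

lemma fseq_continuous (c : ℝ) (n : ℕ) : Continuous (fseq c n) := by
  unfold fseq
  fun_prop

lemma fseq_integral_tendsto (c : ℝ) (hc : 0 < c) :
    Tendsto (fun n : ℕ => ∫ u in Ioi (0:ℝ), fseq c n u) atTop
      (𝓝 (∫ u in Ioi (0:ℝ), u * Real.exp (-c*u - u^2/2))) := by
  apply MeasureTheory.tendsto_integral_filter_of_dominated_convergence
    (bound := fun u => u * Real.exp (-(c*u)))
  · exact Filter.Eventually.of_forall
      (fun n => (fseq_continuous c n).aestronglyMeasurable)
  · filter_upwards [tendsto_sqrt_nat.eventually_ge_atTop (2*c),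
      tendsto_sqrt_nat.eventually_ge_atTop 1] with n h2c h1n
    rw [MeasureTheory.ae_restrict_iff' measurableSet_Ioi]
    refine Filter.Eventually.of_forall (fun u hu => ?_)
    have hu0 : (0:ℝ) < u := hu
    have hs0 : (0:ℝ) < Real.sqrt n := lt_of_lt_of_le one_pos h1n
    have hsne : Real.sqrt n ≠ 0 := ne_of_gt hs0
    have hss : Real.sqrt n * Real.sqrt n = (n:ℝ) := Real.mul_self_sqrt (Nat.cast_nonneg n)
    have hx1 : c / Real.sqrt n ≤ 1 := by
      rw [div_le_one hs0]; nlinarith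
    have ha0 : 0 ≤ (1 - c / Real.sqrt n) / Real.sqrt n := by
      apply div_nonneg _ hs0.le; linarith
    have hz0 : 0 ≤ (1 - c / Real.sqrt n) / Real.sqrt n * u := mul_nonneg ha0 hu0.le
    have hfpos : 0 ≤ fseq c n u := by
      unfold fseq
      have : (0:ℝ) ≤ 1 + (1 - c / Real.sqrt n) / Real.sqrt n * u := by linarith
      positivity
    rw [Real.norm_eq_abs, abs_of_nonneg hfpos]
    unfold fseq
    have hpow : (1 + (1 - c / Real.sqrt n) / Real.sqrt n * u) ^ n
        ≤ Real.exp ((1 - c / Real.sqrt n) / Real.sqrt n * u) ^ n := by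
      apply pow_le_pow_left₀ (by linarith)
      have := Real.add_one_le_exp ((1 - c / Real.sqrt n) / Real.sqrt n * u)
      linarith
    have hexpn : Real.exp ((1 - c / Real.sqrt n) / Real.sqrt n * u) ^ n
        = Real.exp ((n:ℝ) * ((1 - c / Real.sqrt n) / Real.sqrt n * u)) := by
      rw [← Real.exp_nat_mul]
    have hstep : u * Real.exp (-(Real.sqrt n * u)) * (1 + (1 - c / Real.sqrt n) / Real.sqrt n * u) ^ n
        ≤ u * Real.exp (-(Real.sqrt n * u)) * Real.exp ((n:ℝ) * ((1 - c / Real.sqrt n) / Real.sqrt n * u)) := by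
      rw [← hexpn]
      exact mul_le_mul_of_nonneg_left hpow
        (mul_nonneg hu0.le (Real.exp_pos _).le)
    refine hstep.trans_eq ?_
    rw [mul_assoc, ← Real.exp_add]
    congr 2
    have := alg1 hss hsne c u
    linarith
  · have h := myIntegrableOn_pow_mul_exp 1 hc
    simpa [pow_one, IntegrableOn] using h
  · rw [MeasureTheory.ae_restrict_iff' measurableSet_Ioi]
    exact Filter.Eventually.of_forall (fun u hu => fseq_tendsto c hc u hu)

lemma small_integrable (c : ℝ) (hc : 0 < c) :
    IntegrableOn (fun u : ℝ => u * Real.exp (-c*u - u^2/2)) (Ioi 0) := by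
  have hbig := (ftc_lim c hc).1
  apply hbig.mono' (Continuous.aestronglyMeasurable (by fun_prop))
  rw [MeasureTheory.ae_restrict_iff' measurableSet_Ioi]
  refine Filter.Eventually.of_forall (fun u hu => ?_)
  have hu0 : (0:ℝ) < u := hu
  have he := Real.exp_pos (-c*u - u^2/2)
  rw [Real.norm_eq_abs, abs_of_nonneg (by positivity)]
  have h2 : u ≤ u * ((1+c^2) + c*u) := by nlinarith
  calc u * Real.exp (-c*u - u^2/2)
      ≤ (u * ((1+c^2) + c*u)) * Real.exp (-c*u - u^2/2) :=
        mul_le_mul_of_nonneg_right h2 he.le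
    _ = u * ((1+c^2) + c*u) * Real.exp (-c*u - u^2/2) := by ring

lemma Ilim_le (c : ℝ) (hc : 0 < c) :
    (∫ u in Ioi (0:ℝ), u * Real.exp (-c*u - u^2/2)) ≤ 1/(1+c^2) := by
  have mono_le : (∫ u in Ioi (0:ℝ), (1+c^2) * (u * Real.exp (-c*u - u^2/2)))
      ≤ ∫ u in Ioi (0:ℝ), u * ((1 + c^2) + c * u) * Real.exp (-c*u - u^2/2) := by
    apply setIntegral_mono_on ((small_integrable c hc).const_mul _) (ftc_lim c hc).1
      measurableSet_Ioi
    intro u hu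
    have hu0 : (0:ℝ) < u := hu
    have he := Real.exp_pos (-c*u - u^2/2)
    nlinarith [mul_nonneg (mul_nonneg hu0.le he.le) (mul_nonneg hc.le hu0.le)]
  have key : (∫ u in Ioi (0:ℝ), (1+c^2) * (u * Real.exp (-c*u - u^2/2))) ≤ 1 :=
    mono_le.trans_eq (ftc_lim c hc).2
  rw [MeasureTheory.integral_const_mul] at key
  rw [le_div_iff₀ (by positivity : (0:ℝ) < 1 + c^2)]
  linarith

lemma alg5 (m : ℕ) (a w c E u : ℝ) (h1 : ((m:ℝ)+1)*a^2 = w^2) :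
    E * (1+a*u)^m * (u*((((m:ℝ)+1)*a^2 + c^2) + a*c*(((m:ℝ)+1)*a+c)*u))
    = c^2*(u^1*E*(1+a*u)^(m+1))
      + (w^2*(u^1*E*(1+a*u)^m) + w^2*c*(u^2*E*(1+a*u)^m)) := by
  have hps : (1+a*u)^(m+1) = (1+a*u)^m * (1+a*u) := pow_succ _ _
  rw [hps]
  linear_combination (E*(1+a*u)^m*(u + c*u^2)) * h1

lemma identity_n (c : ℝ) (hc : 0 < c) (n : ℕ) (hn : 1 ≤ n) {s : ℝ}
    (hss : s * s = (n:ℝ)) (hs0 : 0 < s) (hx1 : c/s ≤ 1) :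
    c^2 * (∫ u in Ioi (0:ℝ), u^1 * Real.exp (-(s*u)) * (1 + (1-c/s)/s*u)^n)
    + ((1-c/s)^2 * (∫ u in Ioi (0:ℝ), u^1 * Real.exp (-(s*u)) * (1 + (1-c/s)/s*u)^(n-1))
    + (1-c/s)^2 * c * (∫ u in Ioi (0:ℝ), u^2 * Real.exp (-(s*u)) * (1 + (1-c/s)/s*u)^(n-1))) = 1 := by
  have hsne : s ≠ 0 := ne_of_gt hs0
  obtain ⟨m, rfl⟩ := Nat.exists_eq_add_of_le hn
  have hm' : 1 + m - 1 = m := by omega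
  rw [hm']
  set a : ℝ := (1-c/s)/s with hadef
  have ha : 0 ≤ a := div_nonneg (by linarith) hs0.le
  have hm1 : ((m:ℝ)+1) = s*s := by rw [hss]; push_cast; ring
  have hb : ((m:ℝ)+1)*a + c = s := by
    rw [hm1, hadef]; field_simp; ring
  have hbpos : 0 < ((m:ℝ)+1)*a + c := by rw [hb]; exact hs0
  have hftc := (ftc_one m ha hc.le hbpos).2
  rw [hb] at hftc
  have h1 : ((m:ℝ)+1)*a^2 = (1-c/s)^2 := by
    rw [hm1, hadef]; field_simp
  have hpoint : ∀ u : ℝ, Real.exp (-(s*u)) * (1+a*u)^m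
      * (u*((((m:ℝ)+1)*a^2 + c^2) + a*c*(((m:ℝ)+1)*a+c)*u))
      = c^2*(u^1*Real.exp (-(s*u))*(1+a*u)^(m+1))
        + ((1-c/s)^2*(u^1*Real.exp (-(s*u))*(1+a*u)^m)
          + (1-c/s)^2*c*(u^2*Real.exp (-(s*u))*(1+a*u)^m)) :=
    fun u => alg5 m a (1-c/s) c (Real.exp (-(s*u))) u h1
  rw [hb] at hpoint
  have hsplit : (∫ u in Ioi (0:ℝ), Real.exp (-(s*u)) * (1+a*u)^m
      * (u*((((m:ℝ)+1)*a^2 + c^2) + a*c*s*u)))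
      = c^2 * (∫ u in Ioi (0:ℝ), u^1 * Real.exp (-(s*u)) * (1 + a*u)^(m+1))
        + ((1-c/s)^2 * (∫ u in Ioi (0:ℝ), u^1 * Real.exp (-(s*u)) * (1 + a*u)^m)
          + (1-c/s)^2 * c * (∫ u in Ioi (0:ℝ), u^2 * Real.exp (-(s*u)) * (1 + a*u)^m)) := by
    simp only [hpoint]
    have hI1 : Integrable (fun u : ℝ => c^2 * (u^1 * Real.exp (-(s*u)) * (1 + a*u)^(m+1)))
        (volume.restrict (Ioi 0)) := (myIntegrableOn_binom (m+1) 1 a hs0).const_mul _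
    have hI2 : Integrable (fun u : ℝ => (1-c/s)^2 * (u^1 * Real.exp (-(s*u)) * (1 + a*u)^m))
        (volume.restrict (Ioi 0)) := (myIntegrableOn_binom m 1 a hs0).const_mul _
    have hI3 : Integrable (fun u : ℝ => (1-c/s)^2 * c * (u^2 * Real.exp (-(s*u)) * (1 + a*u)^m))
        (volume.restrict (Ioi 0)) := (myIntegrableOn_binom m 2 a hs0).const_mul _
    have hI23 : Integrable (fun u : ℝ => (1-c/s)^2 * (u^1 * Real.exp (-(s*u)) * (1 + a*u)^m)
        + (1-c/s)^2 * c * (u^2 * Real.exp (-(s*u)) * (1 + a*u)^m))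
        (volume.restrict (Ioi 0)) := hI2.add hI3
    rw [MeasureTheory.integral_add hI1 hI23, MeasureTheory.integral_add hI2 hI3,
      MeasureTheory.integral_const_mul, MeasureTheory.integral_const_mul,
      MeasureTheory.integral_const_mul]
  rw [show (1 + m) = (m + 1) by omega, ← hsplit]
  exact hftc

lemma alg4 {s N : ℝ} (hs : s ≠ 0) (hN : s*s = N) (F C c : ℝ) (k : ℕ) :
    (c/s)^2 * (F * (C * ((1-c/s)/N)^k)) = c^2 * (C * ((1-c/s)/s)^k * (F / s^(k+1+1))) := by
  subst hN
  rw [div_pow, div_pow, mul_pow, pow_succ, pow_succ]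
  field_simp
  simp only [div_pow]
  field_simp
  ring

lemma alg7 {s N : ℝ} (hs : s ≠ 0) (hN : s*s = N) (F C c : ℝ) (k : ℕ) :
    N*((1-c/s)/N)^2 * (F * (C * ((1-c/s)/N)^k))
      = (1-c/s)^2 * (C * ((1-c/s)/s)^k * (F / s^(k+1+1))) := by
  subst hN
  rw [div_pow, div_pow, div_pow, mul_pow, mul_pow, pow_succ, pow_succ]
  field_simp
  ring

lemma alg6 {s N : ℝ} (hs : s ≠ 0) (hN : s*s = N) (F C c : ℝ) (k : ℕ) :
    N*((1-c/s)/N)^2 * ((c/s) * (F * (C * ((1-c/s)/N)^k)))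
      = (1-c/s)^2 * c * (C * ((1-c/s)/s)^k * (F / s^(k+2+1))) := by
  subst hN
  rw [div_pow, div_pow, div_pow, mul_pow, mul_pow, pow_succ, pow_succ, pow_succ]
  field_simp
  ring

lemma alg9 {s N c : ℝ} (hs : s ≠ 0) (hN : s*s = N) (hden : c^2 + (1-c/s)^2 ≠ 0) :
    (c/s)^2/((c/s)^2 + N*((1-c/s)/N)^2) = c^2/(c^2+(1-c/s)^2) := by
  subst hN
  have hss : s*s ≠ 0 := mul_ne_zero hs hs
  rw [div_pow, div_pow]
  have hEq : c^2/s^2 + s*s*((1-c/s)^2/(s*s)^2) = (c^2+(1-c/s)^2)/(s*s) := by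
    field_simp
  rw [hEq, div_div_eq_mul_div]
  congr 1
  rw [show s^2 = s*s from pow_two s, div_mul_cancel₀ _ hss]

lemma algQ {S x q A BB N : ℝ} (hS0 : S ≠ 0) (hN : N ≠ 0) (hSval : S = x^2 + N*q^2)
    (hsum1 : x^2*A + N*q^2*BB = 1) :
    q^2/S - q^2*BB = -(1/N)*(x^2/S - x^2*A) := by
  have key : (N*q^2 + x^2)/S = 1 := by
    rw [show N*q^2 + x^2 = S by linarith]
    exact div_self hS0
  have h2 : N*(q^2/S - q^2*BB) + (x^2/S - x^2*A)
      = (N*q^2 + x^2)/S - (x^2*A + N*q^2*BB) := by ring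
  rw [key, hsum1] at h2
  have h4 : N*(q^2/S - q^2*BB) = -(x^2/S - x^2*A) := by linarith
  rw [show -(1/N)*(x^2/S - x^2*A) = (1/N)*(N*(q^2/S - q^2*BB)) from by rw [h4]; ring]
  rw [← mul_assoc, one_div, inv_mul_cancel₀ hN, one_mul]

lemma algH {N Y : ℝ} (hN : N ≠ 0) : (1/2 : ℝ)*(Y + N*((1/N)*Y)) = Y := by
  field_simp
  ring


lemma main_step (c : ℝ) (hc : 0 < c) (n : ℕ) (hn : 1 ≤ n) {s : ℝ}
    (hss : s * s = (n:ℝ)) (hs0 : 0 < s) (hx2 : c/s ≤ 1/2) :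
    (1/2 : ℝ) * ∑ i : Fin (n+1),
      |(if i = (0 : Fin (n+1)) then c/s else (1 - c/s)/(n:ℝ)) ^ 2
          / (∑ j : Fin (n+1), (if j = (0 : Fin (n+1)) then c/s else (1 - c/s)/(n:ℝ)) ^ 2)
        - (if i = (0 : Fin (n+1)) then c/s else (1 - c/s)/(n:ℝ)) ^ 2
          * ∑ k ∈ Finset.range (n+1), ((k+1).factorial : ℝ) *
              ∑ J ∈ Finset.powersetCard k (Finset.univ.erase i),
                ∏ l ∈ J, (if l = (0 : Fin (n+1)) then c/s else (1 - c/s)/(n:ℝ))|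
    = |c^2/(c^2 + (1 - c/s)^2)
        - c^2 * ∫ u in Ioi (0:ℝ), u^1 * Real.exp (-(s*u)) * (1 + (1 - c/s)/s*u)^n| := by
  have hsne : s ≠ 0 := ne_of_gt hs0
  have hx1 : c/s ≤ 1 := by linarith
  have hx0 : 0 < c/s := div_pos hc hs0
  have hn0 : ((n:ℝ)) ≠ 0 := by
    rw [← hss]; exact mul_ne_zero hsne hsne
  set x : ℝ := c/s with hxdef
  set q : ℝ := (1 - x)/(n:ℝ) with hqdef
  set S : ℝ := ∑ j : Fin (n+1), (if j = (0 : Fin (n+1)) then x else q) ^ 2 with hSdef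
  set A : ℝ := ∑ k ∈ Finset.range (n+1), ((k+1).factorial : ℝ) * ((n.choose k : ℝ) * q ^ k)
    with hAdef
  set B1 : ℝ := ∑ k ∈ Finset.range n, ((k+1).factorial : ℝ) * (((n-1).choose k : ℝ) * q ^ k)
    with hB1def
  set B2 : ℝ := ∑ k ∈ Finset.range n, ((k+2).factorial : ℝ) * (((n-1).choose k : ℝ) * q ^ k)
    with hB2def
  set I1 : ℝ := ∫ u in Ioi (0:ℝ), u^1 * Real.exp (-(s*u)) * (1 + (1 - x)/s*u)^n with hI1def
  set J1 : ℝ := ∫ u in Ioi (0:ℝ), u^1 * Real.exp (-(s*u)) * (1 + (1 - x)/s*u)^(n-1) with hJ1def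
  set J2 : ℝ := ∫ u in Ioi (0:ℝ), u^2 * Real.exp (-(s*u)) * (1 + (1 - x)/s*u)^(n-1) with hJ2def
  have hSval : S = x^2 + (n:ℝ)*q^2 := by
    rw [hSdef, Fin.sum_univ_succ, if_pos rfl]
    have hsucc : ∀ i : Fin n, ((if (Fin.succ i : Fin (n+1)) = 0 then x else q)^2) = q^2 :=
      fun i => by rw [if_neg (Fin.succ_ne_zero i)]
    rw [Finset.sum_congr rfl (fun i _ => hsucc i), Finset.sum_const, Finset.card_univ,
      Fintype.card_fin, nsmul_eq_mul]
  have hT0 : ∑ k ∈ Finset.range (n+1), ((k+1).factorial : ℝ) *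
      ∑ J ∈ Finset.powersetCard k (Finset.univ.erase (0 : Fin (n+1))),
        ∏ l ∈ J, (if l = (0 : Fin (n+1)) then x else q) = A :=
    T_zero_eq n q _ (fun l hl => if_neg hl)
  have hTi : ∀ i : Fin (n+1), i ≠ 0 → (∑ k ∈ Finset.range (n+1), ((k+1).factorial : ℝ) *
      ∑ J ∈ Finset.powersetCard k (Finset.univ.erase i),
        ∏ l ∈ J, (if l = (0 : Fin (n+1)) then x else q)) = B1 + x * B2 :=
    fun i hi => T_ne_eq n hn x q _ (if_pos rfl) (fun l hl => if_neg hl) i hi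
  have hAI : x^2 * A = c^2 * I1 := by
    rw [hAdef, hI1def, Finset.mul_sum, hqdef, hxdef, myIntegral_binom n 1 ((1-c/s)/s) hs0,
      Finset.mul_sum]
    exact Finset.sum_congr rfl (fun k _ => alg4 hsne hss _ _ c k)
  have hrange : n - 1 + 1 = n := by omega
  have hBJ1 : (n:ℝ)*q^2*B1 = (1-x)^2 * J1 := by
    rw [hB1def, hJ1def, Finset.mul_sum, hqdef, hxdef, myIntegral_binom (n-1) 1 ((1-c/s)/s) hs0,
      hrange, Finset.mul_sum]
    exact Finset.sum_congr rfl (fun k _ => alg7 hsne hss _ _ c k)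
  have hBJ2 : (n:ℝ)*q^2*(x*B2) = (1-x)^2*c*J2 := by
    rw [hB2def, hJ2def, Finset.mul_sum, hqdef, hxdef, myIntegral_binom (n-1) 2 ((1-c/s)/s) hs0,
      hrange, Finset.mul_sum, Finset.mul_sum]
    exact Finset.sum_congr rfl (fun k _ => alg6 hsne hss _ _ c k)
  have hId := identity_n c hc n hn hss hs0 hx1
  rw [← hxdef] at hId
  rw [← hI1def, ← hJ1def, ← hJ2def] at hId
  have hsum1 : x^2*A + (n:ℝ)*q^2*(B1 + x*B2) = 1 := by
    have hexp : (n:ℝ)*q^2*(B1 + x*B2) = (n:ℝ)*q^2*B1 + (n:ℝ)*q^2*(x*B2) := by ring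
    rw [hAI, hexp, hBJ1, hBJ2]
    linarith [hId]
  have hSpos : 0 < S := by
    rw [hSval]
    have h1 : 0 < x^2 := pow_pos hx0 2
    have h2 : 0 ≤ (n:ℝ)*q^2 := mul_nonneg (Nat.cast_nonneg n) (sq_nonneg q)
    linarith
  have hS0 : S ≠ 0 := ne_of_gt hSpos
  have hQd : q^2/S - q^2*(B1 + x*B2) = -(1/(n:ℝ))*(x^2/S - x^2*A) :=
    algQ hS0 hn0 hSval hsum1
  have hcard : (Finset.univ.erase (0 : Fin (n+1))).card = n := by
    rw [Finset.card_erase_of_mem (Finset.mem_univ _), Finset.card_univ, Fintype.card_fin]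
    omega
  have hmain : (∑ i : Fin (n+1),
      |(if i = (0 : Fin (n+1)) then x else q) ^ 2 / S
        - (if i = (0 : Fin (n+1)) then x else q) ^ 2
          * ∑ k ∈ Finset.range (n+1), ((k+1).factorial : ℝ) *
              ∑ J ∈ Finset.powersetCard k (Finset.univ.erase i),
                ∏ l ∈ J, (if l = (0 : Fin (n+1)) then x else q)|)
      = |x^2/S - x^2*A| + (n:ℝ)*|q^2/S - q^2*(B1 + x*B2)| := by
    rw [← Finset.add_sum_erase _ _ (Finset.mem_univ (0 : Fin (n+1)))]
    congr 1
    · rw [if_pos rfl, hT0]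
    · rw [Finset.sum_congr rfl (fun i hi => ?_), Finset.sum_const, hcard, nsmul_eq_mul]
      have hi0 : i ≠ 0 := (Finset.mem_erase.mp hi).1
      rw [if_neg hi0, hTi i hi0]
  rw [hmain, hQd]
  have habs : |(-(1/(n:ℝ)))*(x^2/S - x^2*A)| = (1/(n:ℝ)) * |x^2/S - x^2*A| := by
    rw [abs_mul, abs_neg, abs_of_nonneg (by positivity : (0:ℝ) ≤ 1/(n:ℝ))]
  rw [habs]
  rw [algH hn0]
  have hden : c^2 + (1 - c/s)^2 ≠ 0 := by positivity
  have hxS : x^2/S = c^2/(c^2 + (1-x)^2) := by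
    rw [hSval, hxdef, hqdef]
    exact alg9 hsne hss hden
  rw [hxS, hAI, hxdef]

theorem stmt_13 (c : ℝ) (hc : 0 < c) :
    Filter.Tendsto (fun n : ℕ =>
      let x : ℝ := c / Real.sqrt n
      let p : Fin (n + 1) → ℝ := fun i => if i = 0 then x else (1 - x) / n
      (1 / 2) * ∑ i, |p i ^ 2 / (∑ j, p j ^ 2) -
          p i ^ 2 * ∑ k ∈ Finset.range (n + 1), (Nat.factorial (k + 1) : ℝ) *
            ∑ J ∈ Finset.powersetCard k (Finset.univ.erase i), ∏ l ∈ J, p l|)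
      Filter.atTop
      (nhds (c ^ 2 / (1 + c ^ 2) -
        ∫ t in Set.Ioi (0 : ℝ), c ^ 2 * t * Real.exp (-c * t - t ^ 2 / 2))) := by
  have hIeq : ∀ n : ℕ, (∫ u in Ioi (0:ℝ), u^1 * Real.exp (-(Real.sqrt n*u))
      * (1 + (1 - c/Real.sqrt n)/Real.sqrt n*u)^n) = ∫ u in Ioi (0:ℝ), fseq c n u := by
    intro n
    unfold fseq
    simp only [pow_one]
  have hL' : (∫ t in Ioi (0:ℝ), c^2*t*Real.exp (-c*t - t^2/2))
      = c^2 * ∫ u in Ioi (0:ℝ), u * Real.exp (-c*u - u^2/2) := by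
    rw [← MeasureTheory.integral_const_mul]
    simp only [mul_assoc]
  have h1 : Tendsto (fun n : ℕ => 1 - c/Real.sqrt n) atTop (𝓝 1) := by
    simpa using (tendsto_x0 c).const_sub 1
  have h2 : Tendsto (fun n : ℕ => c^2 + (1 - c/Real.sqrt n)^2) atTop (𝓝 (c^2 + 1)) := by
    have := (h1.pow 2).const_add (c^2)
    simpa using this
  have hpart1 : Tendsto (fun n : ℕ => c^2/(c^2 + (1 - c/Real.sqrt n)^2)) atTop
      (𝓝 (c^2/(c^2+1))) :=
    tendsto_const_nhds.div h2 (by positivity)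
  have hpart2 : Tendsto (fun n : ℕ => c^2 * ∫ u in Ioi (0:ℝ), fseq c n u) atTop
      (𝓝 (c^2 * ∫ u in Ioi (0:ℝ), u * Real.exp (-c*u - u^2/2))) :=
    (fseq_integral_tendsto c hc).const_mul (c^2)
  have hpsi := hpart1.sub hpart2
  have habs := hpsi.abs
  have hnonneg : 0 ≤ c^2/(c^2+1) - c^2 * ∫ u in Ioi (0:ℝ), u * Real.exp (-c*u - u^2/2) := by
    have hle := Ilim_le c hc
    have hmul : c^2 * (∫ u in Ioi (0:ℝ), u * Real.exp (-c*u - u^2/2)) ≤ c^2 * (1/(1+c^2)) :=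
      mul_le_mul_of_nonneg_left hle (sq_nonneg c)
    have : c^2 * (1/(1+c^2)) = c^2/(c^2+1) := by
      rw [mul_one_div]
      ring_nf
    linarith
  have hval : c^2/(1+c^2) - (∫ t in Ioi (0:ℝ), c^2*t*Real.exp (-c*t - t^2/2))
      = |c^2/(c^2+1) - c^2 * ∫ u in Ioi (0:ℝ), u * Real.exp (-c*u - u^2/2)| := by
    rw [hL', abs_of_nonneg hnonneg]
    ring_nf
  rw [hval]
  refine habs.congr' ?_
  filter_upwards [eventually_ge_atTop 1,
    Filter.Tendsto.eventually_lt_const (by norm_num : (0:ℝ) < 1/2) (tendsto_x0 c)]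
    with n hn1 hx2
  have hnR : (0:ℝ) < (n:ℝ) := by exact_mod_cast hn1
  have hs0 : 0 < Real.sqrt n := Real.sqrt_pos.mpr hnR
  have hss : Real.sqrt n * Real.sqrt n = (n:ℝ) := Real.mul_self_sqrt (Nat.cast_nonneg n)
  rw [← hIeq n]
  exact (main_step c hc n hn1 hss hs0 hx2.le).symm
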